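/- Let θ₀ ∈ R^{m×n} be a matrix of rank s, and suppose ‖ηθ* − θ₀‖_* ≤ ρ/16 and ρ ≥ 16r√s. Then for every matrix W ∈ R^{m×n} with Frobenius norm ‖W‖_F ≤ r and nuclear norm ‖W‖_* = ρ, there exists a matrix z in the subdifferential of the nuclear norm at θ₀ such that ⟨z, W⟩ ≥ (3/4)ρ. -/

import Mathlib

noncomputable section

/-- Nuclear norm of a real matrix: sum of its singular values. -/
def nuclearNorm {m n : ℕ} (A : Matrix (Fin m) (Fin n) ℝ) : ℝ :=
  ∑ j, Real.sqrt ((Matrix.isHermitian_conjTranspose_mul_self A).eigenvalues j)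

/-- Frobenius norm of a real matrix. -/
def frobNorm {m n : ℕ} (A : Matrix (Fin m) (Fin n) ℝ) : ℝ :=
  Real.sqrt (∑ i, ∑ j, (A i j) ^ 2)

/-- Frobenius inner product of two matrices. -/
def matInner {m n : ℕ} (A B : Matrix (Fin m) (Fin n) ℝ) : ℝ :=
  Matrix.trace (A.transpose * B)

open Matrix Finset

namespace NNAux

lemma sum_dot {ι : Type*} {k : ℕ} (S : Finset ι) (f : ι → Fin k → ℝ) (c : Fin k → ℝ) :
    (∑ j ∈ S, f j) ⬝ᵥ c = ∑ j ∈ S, f j ⬝ᵥ c := by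
  simp only [dotProduct, Finset.sum_apply, Finset.sum_mul]
  exact Finset.sum_comm

lemma dot_sum {ι : Type*} {k : ℕ} (S : Finset ι) (c : Fin k → ℝ) (f : ι → Fin k → ℝ) :
    c ⬝ᵥ (∑ j ∈ S, f j) = ∑ j ∈ S, c ⬝ᵥ f j := by
  rw [dotProduct_comm, sum_dot]
  exact Finset.sum_congr rfl fun j _ => dotProduct_comm _ _

lemma dot_self_nonneg {k : ℕ} (c : Fin k → ℝ) : 0 ≤ c ⬝ᵥ c :=
  Finset.sum_nonneg fun i _ => mul_self_nonneg _

lemma bessel {k : ℕ} {ι : Type*} [DecidableEq ι] (S : Finset ι) (u : ι → Fin k → ℝ)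
    (hu : ∀ i ∈ S, ∀ j ∈ S, u i ⬝ᵥ u j = if i = j then 1 else 0) (c : Fin k → ℝ) :
    ∑ j ∈ S, (u j ⬝ᵥ c)^2 ≤ c ⬝ᵥ c := by
  have h0 : 0 ≤ (c - ∑ j ∈ S, (u j ⬝ᵥ c) • u j) ⬝ᵥ (c - ∑ j ∈ S, (u j ⬝ᵥ c) • u j) :=
    dot_self_nonneg _
  have h1 : (∑ j ∈ S, (u j ⬝ᵥ c) • u j) ⬝ᵥ c = ∑ j ∈ S, (u j ⬝ᵥ c)^2 := by
    rw [sum_dot]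
    refine Finset.sum_congr rfl fun j hj => ?_
    rw [smul_dotProduct, smul_eq_mul, sq]
  have h2 : (∑ j ∈ S, (u j ⬝ᵥ c) • u j) ⬝ᵥ (∑ j ∈ S, (u j ⬝ᵥ c) • u j)
      = ∑ j ∈ S, (u j ⬝ᵥ c)^2 := by
    rw [dot_sum]
    refine (Finset.sum_congr rfl fun j hj => ?_)
    rw [dotProduct_smul, smul_eq_mul, sum_dot]
    have : ∀ i ∈ S, ((u i ⬝ᵥ c) • u i) ⬝ᵥ u j = if i = j then u j ⬝ᵥ c else 0 := by
      intro i hi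
      rw [smul_dotProduct, hu i hi j hj]
      split <;> simp_all
    rw [Finset.sum_congr rfl this, Finset.sum_ite_eq' S j (fun _ => u j ⬝ᵥ c), if_pos hj, sq]
  rw [sub_dotProduct, dotProduct_sub, dotProduct_sub, h1, h2,
    dotProduct_comm c (∑ j ∈ S, (u j ⬝ᵥ c) • u j), h1] at h0
  linarith

lemma dot_self_eq_zero {k : ℕ} {c : Fin k → ℝ} (h : c ⬝ᵥ c = 0) : c = 0 := by
  funext i
  have := (Finset.sum_eq_zero_iff_of_nonneg (fun i _ => mul_self_nonneg (c i))).mp h i (mem_univ i)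
  exact mul_self_eq_zero.mp this

lemma mulVec_dot {m n : ℕ} (A : Matrix (Fin m) (Fin n) ℝ) (x : Fin n → ℝ) (z : Fin m → ℝ) :
    (A *ᵥ x) ⬝ᵥ z = x ⬝ᵥ (Aᵀ *ᵥ z) := by
  simp only [dotProduct, Matrix.mulVec, dotProduct, transpose_apply, Finset.sum_mul,
    Finset.mul_sum]
  rw [Finset.sum_comm]
  refine Finset.sum_congr rfl fun l _ => Finset.sum_congr rfl fun i _ => by ring

lemma exists_svd {m n : ℕ} (A : Matrix (Fin m) (Fin n) ℝ) :
    ∃ (K : Finset (Fin n)) (σ : Fin n → ℝ) (p : Fin n → Fin m → ℝ) (q : Fin n → Fin n → ℝ),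
      (∀ j ∈ K, 0 < σ j) ∧
      (∀ i j, q i ⬝ᵥ q j = if i = j then 1 else 0) ∧
      (∀ i ∈ K, ∀ j ∈ K, p i ⬝ᵥ p j = if i = j then 1 else 0) ∧
      (∀ i l, A i l = ∑ j ∈ K, σ j * (p j i * q j l)) ∧
      nuclearNorm A = ∑ j ∈ K, σ j ∧
      (∑ j ∈ K, σ j ^ 2 = ∑ i, ∑ l, A i l ^ 2) ∧
      K.card = A.rank := by
  classical
  have hA := Matrix.isHermitian_conjTranspose_mul_self A
  set lam : Fin n → ℝ := hA.eigenvalues with hlam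
  set q : Fin n → Fin n → ℝ := fun j => ⇑(hA.eigenvectorBasis j) with hqdef
  have hlam0 : ∀ j, 0 ≤ lam j := Matrix.eigenvalues_conjTranspose_mul_self_nonneg A
  have hq : ∀ i j, q i ⬝ᵥ q j = if i = j then 1 else 0 := by
    intro i j
    have horth := hA.eigenvectorBasis.orthonormal
    have := orthonormal_iff_ite.mp horth i j
    simp [PiLp.inner_apply, RCLike.inner_apply, conj_trivial, dotProduct, mul_comm] at this
    exact this
  have cdot : ∀ i j, (A *ᵥ q i) ⬝ᵥ (A *ᵥ q j) = if i = j then lam j else 0 := by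
    intro i j
    rw [mulVec_dot, mulVec_mulVec]
    have htr : Aᵀ * A = Aᴴ * A := by
      rw [conjTranspose_eq_transpose_of_trivial]
    rw [htr]
    rw [hA.mulVec_eigenvectorBasis j]
    rw [dotProduct_smul, smul_eq_mul, hq i j]
    split
    · simp
      rfl
    · simp
  have hcomp : ∀ l l' : Fin n, (∑ j, q j l * q j l') = if l' = l then 1 else 0 := by
    intro l l'
    have h := hA.eigenvectorBasis.sum_repr' (EuclideanSpace.single l' (1:ℝ))
    have h2 := congrArg (fun v => v l) h
    simp only [EuclideanSpace.inner_single_right, conj_trivial, mul_one, one_mul] at h2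
    have h3 : (∑ i : Fin n, hA.eigenvectorBasis i l' • hA.eigenvectorBasis i) l
        = ∑ i : Fin n, hA.eigenvectorBasis i l' * hA.eigenvectorBasis i l :=
      by rw [WithLp.ofLp_sum, Finset.sum_apply]; rfl
    rw [h3, EuclideanSpace.single_apply] at h2
    rw [show (if l' = l then (1:ℝ) else 0) = if l = l' then 1 else 0 by simp [eq_comm], ← h2]
    exact Finset.sum_congr rfl fun j _ => mul_comm _ _
  set K : Finset (Fin n) := Finset.univ.filter (fun j => lam j ≠ 0) with hK
  set σ : Fin n → ℝ := fun j => Real.sqrt (lam j) with hσ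
  set p : Fin n → Fin m → ℝ := fun j => (σ j)⁻¹ • (A *ᵥ q j) with hp
  have hσK : ∀ j ∈ K, 0 < σ j := by
    intro j hj
    rw [hK, Finset.mem_filter] at hj
    exact Real.sqrt_pos.mpr (lt_of_le_of_ne (hlam0 j) (Ne.symm hj.2))
  have hσsq : ∀ j, σ j * σ j = lam j := fun j => Real.mul_self_sqrt (hlam0 j)
  have hcK : ∀ j, j ∉ K → A *ᵥ q j = 0 := by
    intro j hj
    rw [hK, Finset.mem_filter] at hj
    push_neg at hj
    have : lam j = 0 := hj (Finset.mem_univ j)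
    apply dot_self_eq_zero
    rw [cdot j j, if_pos rfl, this]
  have hpK : ∀ i ∈ K, ∀ j ∈ K, p i ⬝ᵥ p j = if i = j then 1 else 0 := by
    intro i hi j hj
    rw [hp]
    simp only [smul_dotProduct, dotProduct_smul, smul_eq_mul, cdot i j]
    split_ifs with h
    · subst h
      have hne := (hσK i hi).ne'
      rw [← hσsq i]
      field_simp
    · simp
  have hdecomp : ∀ i l, A i l = ∑ j ∈ K, σ j * (p j i * q j l) := by
    intro i l
    have h1 : A i l = ∑ j, (A *ᵥ q j) i * q j l := by
      have : ∀ j, (A *ᵥ q j) i * q j l = ∑ l', A i l' * q j l' * q j l := by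
        intro j
        rw [Matrix.mulVec, dotProduct, Finset.sum_mul]
      rw [Finset.sum_congr rfl fun j _ => this j, Finset.sum_comm]
      have : ∀ l', (∑ j, A i l' * q j l' * q j l) = A i l' * if l = l' then 1 else 0 := by
        intro l'
        rw [← hcomp l' l, Finset.mul_sum]
        exact Finset.sum_congr rfl fun j _ => by ring
      rw [Finset.sum_congr rfl fun l' _ => this l']
      simp
    rw [h1, ← Finset.sum_subset (Finset.subset_univ K)]
    · refine Finset.sum_congr rfl fun j hj => ?_
      rw [hp]
      simp only [Pi.smul_apply, smul_eq_mul]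
      have := (hσK j hj).ne'
      field_simp
    · intro j _ hj
      rw [hcK j hj]
      simp
  have hnn : nuclearNorm A = ∑ j ∈ K, σ j := by
    have hzero : ∀ j ∈ Finset.univ, j ∉ K → Real.sqrt (lam j) = 0 := by
      intro j _ hj
      rw [hK, Finset.mem_filter] at hj
      push_neg at hj
      rw [hj (Finset.mem_univ j), Real.sqrt_zero]
    have hdef : nuclearNorm A = ∑ j, Real.sqrt (lam j) := rfl
    rw [hdef, ← Finset.sum_subset (Finset.subset_univ K) hzero]
  have hfrob : ∑ j ∈ K, σ j ^ 2 = ∑ i, ∑ l, A i l ^ 2 := by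
    have htr1 : (Aᴴ * A).trace = ∑ j, lam j := by
      have hspec := hA.spectral_theorem
      set U : Matrix (Fin n) (Fin n) ℝ := (hA.eigenvectorUnitary : Matrix (Fin n) (Fin n) ℝ)
        with hU
      have hUstar : star U * U = 1 := (hA.eigenvectorUnitary).2.1
      calc (Aᴴ * A).trace
          = (U * Matrix.diagonal (RCLike.ofReal ∘ lam) * star U).trace := by rw [hspec, Unitary.conjStarAlgAut_apply]
        _ = (star U * (U * Matrix.diagonal (RCLike.ofReal ∘ lam))).trace := by
            rw [Matrix.trace_mul_comm]
        _ = ((star U * U) * Matrix.diagonal (RCLike.ofReal ∘ lam)).trace := by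
            rw [mul_assoc]
        _ = (Matrix.diagonal (RCLike.ofReal ∘ lam)).trace := by rw [hUstar, one_mul]
        _ = ∑ j, lam j := by
            rw [Matrix.trace_diagonal]
            rfl
    have htr2 : (Aᴴ * A).trace = ∑ l, ∑ i, A i l * A i l := by
      rw [Matrix.trace]
      refine Finset.sum_congr rfl fun l _ => ?_
      rw [Matrix.diag_apply, Matrix.mul_apply]
      refine Finset.sum_congr rfl fun i _ => ?_
      rw [conjTranspose_apply]
      simp [mul_comm]
    have hext : ∑ j ∈ K, σ j ^ 2 = ∑ j, lam j := by
      rw [← Finset.sum_subset (Finset.subset_univ K)]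
      · exact Finset.sum_congr rfl fun j _ => by rw [sq, hσsq j]
      · intro j _ hj
        rw [hK, Finset.mem_filter] at hj
        push_neg at hj
        exact hj (Finset.mem_univ j)
    rw [hext, htr1.symm.trans htr2, Finset.sum_comm]
    exact Finset.sum_congr rfl fun i _ => Finset.sum_congr rfl fun l _ => (sq (A i l)).symm
  have hcard : K.card = A.rank := by
    have h1 : A.rank = (Aᴴ * A).rank := by
      rw [conjTranspose_eq_transpose_of_trivial, rank_transpose_mul_self]
    rw [h1, hA.rank_eq_card_non_zero_eigs, Fintype.card_subtype, hK]
  exact ⟨K, σ, p, q, hσK, hq, hpK, hdecomp, hnn, hfrob, hcard⟩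


lemma dot_mulVec_eq {m n : ℕ} {A : Matrix (Fin m) (Fin n) ℝ} {K : Finset (Fin n)}
    {σ : Fin n → ℝ} {p : Fin n → Fin m → ℝ} {q : Fin n → Fin n → ℝ}
    (hA : ∀ i l, A i l = ∑ j ∈ K, σ j * (p j i * q j l))
    (u : Fin m → ℝ) (x : Fin n → ℝ) :
    u ⬝ᵥ (A *ᵥ x) = ∑ k ∈ K, σ k * ((u ⬝ᵥ p k) * (q k ⬝ᵥ x)) := by
  have h1 : ∀ i, u i * (A *ᵥ x) i = ∑ k ∈ K, σ k * ((u i * p k i) * (q k ⬝ᵥ x)) := by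
    intro i
    show u i * (∑ l, A i l * x l) = _
    calc u i * ∑ l, A i l * x l
        = ∑ l, u i * (A i l * x l) := by rw [Finset.mul_sum]
      _ = ∑ l, ∑ k ∈ K, σ k * ((u i * p k i) * (q k l * x l)) := by
          refine Finset.sum_congr rfl fun l _ => ?_
          rw [hA i l, Finset.sum_mul, Finset.mul_sum]
          exact Finset.sum_congr rfl fun k _ => by ring
      _ = ∑ k ∈ K, ∑ l, σ k * ((u i * p k i) * (q k l * x l)) := Finset.sum_comm
      _ = ∑ k ∈ K, σ k * ((u i * p k i) * (q k ⬝ᵥ x)) := by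
          refine Finset.sum_congr rfl fun k _ => ?_
          rw [dotProduct, Finset.mul_sum, Finset.mul_sum]
  rw [dotProduct, Finset.sum_congr rfl fun i _ => h1 i, Finset.sum_comm]
  refine Finset.sum_congr rfl fun k _ => Eq.symm ?_
  rw [dotProduct, Finset.sum_mul, Finset.mul_sum]
  try exact Finset.sum_congr rfl fun i _ => by ring

/-- The key dual bound: pairing a matrix against any pair of orthonormal families is
at most the nuclear norm. -/
lemma key {m n : ℕ} (A : Matrix (Fin m) (Fin n) ℝ) {ι : Type*} [DecidableEq ι] (S : Finset ι)
    (u : ι → Fin m → ℝ) (v : ι → Fin n → ℝ)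
    (hu : ∀ i ∈ S, ∀ j ∈ S, u i ⬝ᵥ u j = if i = j then 1 else 0)
    (hv : ∀ i ∈ S, ∀ j ∈ S, v i ⬝ᵥ v j = if i = j then 1 else 0) :
    ∑ j ∈ S, u j ⬝ᵥ (A *ᵥ v j) ≤ nuclearNorm A := by
  obtain ⟨K, σ, p, q, hσ, hq, hp, hA, hN, _, _⟩ := exists_svd A
  rw [hN, Finset.sum_congr rfl fun j _ => dot_mulVec_eq hA (u j) (v j), Finset.sum_comm]
  refine Finset.sum_le_sum fun k hk => ?_
  have hb1 : ∑ j ∈ S, (u j ⬝ᵥ p k)^2 ≤ p k ⬝ᵥ p k := bessel S u hu (p k)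
  have hb2 : ∑ j ∈ S, (v j ⬝ᵥ q k)^2 ≤ q k ⬝ᵥ q k := bessel S v hv (q k)
  rw [hp k hk k hk, if_pos rfl] at hb1
  rw [hq k k, if_pos rfl] at hb2
  have hcs := Finset.sum_mul_sq_le_sq_mul_sq S (fun j => u j ⬝ᵥ p k) (fun j => v j ⬝ᵥ q k)
  have h1 : (∑ j ∈ S, (u j ⬝ᵥ p k) * (v j ⬝ᵥ q k))^2 ≤ 1 := by
    calc (∑ j ∈ S, (u j ⬝ᵥ p k) * (v j ⬝ᵥ q k))^2
        ≤ (∑ j ∈ S, (u j ⬝ᵥ p k)^2) * (∑ j ∈ S, (v j ⬝ᵥ q k)^2) := hcs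
      _ ≤ 1 * 1 := by
          apply mul_le_mul hb1 hb2 (Finset.sum_nonneg fun j _ => sq_nonneg _) zero_le_one
      _ = 1 := one_mul 1
  have h2 : ∑ j ∈ S, (u j ⬝ᵥ p k) * (v j ⬝ᵥ q k) ≤ 1 := by
    nlinarith [sq_nonneg (∑ j ∈ S, (u j ⬝ᵥ p k) * (v j ⬝ᵥ q k) - 1),
      sq_nonneg (∑ j ∈ S, (u j ⬝ᵥ p k) * (v j ⬝ᵥ q k) + 1)]
  calc ∑ j ∈ S, σ k * ((u j ⬝ᵥ p k) * (q k ⬝ᵥ v j))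
      = σ k * ∑ j ∈ S, (u j ⬝ᵥ p k) * (v j ⬝ᵥ q k) := by
        rw [Finset.mul_sum]
        exact Finset.sum_congr rfl fun j _ => by rw [dotProduct_comm (q k) (v j)]
    _ ≤ σ k * 1 := by
        apply mul_le_mul_of_nonneg_left h2 (hσ k hk).le
    _ = σ k := mul_one _

lemma nuclear_nonneg {m n : ℕ} (A : Matrix (Fin m) (Fin n) ℝ) : 0 ≤ nuclearNorm A := by
  obtain ⟨K, σ, p, q, hσ, _, _, _, hN, _, _⟩ := exists_svd A
  rw [hN]
  exact Finset.sum_nonneg fun j hj => (hσ j hj).le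

lemma nuclear_triangle {m n : ℕ} (X Y : Matrix (Fin m) (Fin n) ℝ) :
    nuclearNorm (X + Y) ≤ nuclearNorm X + nuclearNorm Y := by
  obtain ⟨K, σ, p, q, hσ, hq, hp, hA, hN, _, _⟩ := exists_svd (X + Y)
  have hqK : ∀ i ∈ K, ∀ j ∈ K, q i ⬝ᵥ q j = if i = j then 1 else 0 := fun i _ j _ => hq i j
  have hdiag : ∀ j ∈ K, p j ⬝ᵥ ((X + Y) *ᵥ q j) = σ j := by
    intro j hj
    rw [dot_mulVec_eq hA]
    have : ∀ k ∈ K, σ k * ((p j ⬝ᵥ p k) * (q k ⬝ᵥ q j)) = if k = j then σ j else 0 := by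
      intro k hk
      rw [hp j hj k hk, hq k j]
      by_cases h : k = j
      · subst h; simp
      · have h' : ¬ (j = k) := fun hc => h hc.symm
        simp [h, h']
    rw [Finset.sum_congr rfl this, Finset.sum_ite_eq' K j (fun _ => σ j), if_pos hj]
  have hsum : nuclearNorm (X + Y) = ∑ j ∈ K, p j ⬝ᵥ ((X + Y) *ᵥ q j) := by
    rw [hN]
    exact (Finset.sum_congr rfl hdiag).symm
  rw [hsum]
  have hsplit : ∀ j ∈ K, p j ⬝ᵥ ((X + Y) *ᵥ q j)
      = p j ⬝ᵥ (X *ᵥ q j) + p j ⬝ᵥ (Y *ᵥ q j) := by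
    intro j _
    rw [Matrix.add_mulVec, dotProduct_add]
  rw [Finset.sum_congr rfl hsplit, Finset.sum_add_distrib]
  exact add_le_add (key X K p q hp hqK) (key Y K p q hp hqK)


/-- Pairing an orthonormal "projection" against itself. -/
lemma proj_dot_self {k : ℕ} {ι : Type*} [DecidableEq ι] (S : Finset ι) (u : ι → Fin k → ℝ)
    (hu : ∀ i ∈ S, ∀ j ∈ S, u i ⬝ᵥ u j = if i = j then 1 else 0) (c : Fin k → ℝ) :
    (∑ j ∈ S, (u j ⬝ᵥ c) • u j) ⬝ᵥ (∑ j ∈ S, (u j ⬝ᵥ c) • u j) = ∑ j ∈ S, (u j ⬝ᵥ c)^2 := by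
  rw [dot_sum]
  refine (Finset.sum_congr rfl fun j hj => ?_)
  rw [dotProduct_smul, smul_eq_mul, sum_dot]
  have : ∀ i ∈ S, ((u i ⬝ᵥ c) • u i) ⬝ᵥ u j = if i = j then u j ⬝ᵥ c else 0 := by
    intro i hi
    rw [smul_dotProduct, hu i hi j hj]
    split <;> simp_all
  rw [Finset.sum_congr rfl this, Finset.sum_ite_eq' S j (fun _ => u j ⬝ᵥ c), if_pos hj, sq]

lemma dot_proj {k : ℕ} {ι : Type*} [DecidableEq ι] (S : Finset ι) (u : ι → Fin k → ℝ)
    (c : Fin k → ℝ) :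
    c ⬝ᵥ (∑ j ∈ S, (u j ⬝ᵥ c) • u j) = ∑ j ∈ S, (u j ⬝ᵥ c)^2 := by
  rw [dot_sum]
  refine Finset.sum_congr rfl fun j hj => ?_
  rw [dotProduct_smul, smul_eq_mul, dotProduct_comm c (u j), sq]

lemma sub_proj_dot_le {k : ℕ} {ι : Type*} [DecidableEq ι] (S : Finset ι) (u : ι → Fin k → ℝ)
    (hu : ∀ i ∈ S, ∀ j ∈ S, u i ⬝ᵥ u j = if i = j then 1 else 0) (c : Fin k → ℝ) :
    (c - ∑ j ∈ S, (u j ⬝ᵥ c) • u j) ⬝ᵥ (c - ∑ j ∈ S, (u j ⬝ᵥ c) • u j) ≤ c ⬝ᵥ c := by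
  rw [sub_dotProduct, dotProduct_sub, dotProduct_sub, proj_dot_self S u hu c, dot_proj S u c,
    dotProduct_comm (∑ j ∈ S, (u j ⬝ᵥ c) • u j) c, dot_proj S u c]
  have := Finset.sum_nonneg (fun j (_ : j ∈ S) => sq_nonneg (u j ⬝ᵥ c))
  linarith

/-- Nuclear norm is at most `√rank` times the Frobenius norm. -/
lemma nuclear_le_sqrt_rank_mul_frob {m n : ℕ} (A : Matrix (Fin m) (Fin n) ℝ) {t : ℕ}
    (ht : A.rank ≤ t) : nuclearNorm A ≤ Real.sqrt t * frobNorm A := by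
  obtain ⟨K, σ, p, q, hσ, hq, hp, hA, hN, hF, hcard⟩ := exists_svd A
  rw [hN]
  have hcs := Finset.sum_mul_sq_le_sq_mul_sq K (fun _ => (1:ℝ)) (fun j => σ j)
  simp only [one_pow, one_mul, Finset.sum_const, nsmul_eq_mul] at hcs
  have hF2 : (0:ℝ) ≤ ∑ i, ∑ l, A i l ^ 2 :=
    Finset.sum_nonneg fun i _ => Finset.sum_nonneg fun l _ => sq_nonneg _
  have hσsum : (0:ℝ) ≤ ∑ j ∈ K, σ j := Finset.sum_nonneg fun j hj => (hσ j hj).le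
  have h1 : (∑ j ∈ K, σ j)^2 ≤ (t : ℝ) * ∑ i, ∑ l, A i l ^ 2 := by
    calc (∑ j ∈ K, σ j)^2 ≤ (K.card : ℝ) * ∑ j ∈ K, σ j ^2 := by
          calc (∑ j ∈ K, σ j)^2 ≤ (K.card : ℝ) * 1 * ∑ j ∈ K, σ j ^2 := hcs
            _ = (K.card : ℝ) * ∑ j ∈ K, σ j ^2 := by ring
      _ ≤ (t : ℝ) * ∑ j ∈ K, σ j ^2 := by
          apply mul_le_mul_of_nonneg_right _ (Finset.sum_nonneg fun j _ => sq_nonneg _)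
          exact_mod_cast hcard ▸ ht
      _ = (t : ℝ) * ∑ i, ∑ l, A i l ^ 2 := by rw [hF]
  calc ∑ j ∈ K, σ j = Real.sqrt ((∑ j ∈ K, σ j)^2) := (Real.sqrt_sq hσsum).symm
    _ ≤ Real.sqrt ((t : ℝ) * ∑ i, ∑ l, A i l ^ 2) := Real.sqrt_le_sqrt h1
    _ = Real.sqrt t * frobNorm A := by
        rw [Real.sqrt_mul (Nat.cast_nonneg t), frobNorm]


lemma matInner_eq {m n : ℕ} (X A : Matrix (Fin m) (Fin n) ℝ) :
    matInner X A = ∑ i, ∑ l, X i l * A i l := by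
  rw [matInner, Matrix.trace]
  calc ∑ l, (Xᵀ * A).diag l
      = ∑ l, ∑ i, X i l * A i l := by
        refine Finset.sum_congr rfl fun l _ => ?_
        rw [Matrix.diag_apply, Matrix.mul_apply]
        exact Finset.sum_congr rfl fun i _ => by rw [Matrix.transpose_apply]
    _ = ∑ i, ∑ l, X i l * A i l := Finset.sum_comm

lemma pair_sum {m n : ℕ} {ι : Type*} (S : Finset ι) (a : ι → Fin m → ℝ) (b : ι → Fin n → ℝ)
    (C : Matrix (Fin m) (Fin n) ℝ) :
    ∑ i, ∑ l, (∑ k ∈ S, a k i * b k l) * C i l = ∑ k ∈ S, a k ⬝ᵥ (C *ᵥ b k) := by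
  calc ∑ i, ∑ l, (∑ k ∈ S, a k i * b k l) * C i l
      = ∑ i, ∑ k ∈ S, ∑ l, a k i * (C i l * b k l) := by
        refine Finset.sum_congr rfl fun i _ => ?_
        calc ∑ l, (∑ k ∈ S, a k i * b k l) * C i l
            = ∑ l, ∑ k ∈ S, a k i * (C i l * b k l) := by
              refine Finset.sum_congr rfl fun l _ => ?_
              rw [Finset.sum_mul]
              exact Finset.sum_congr rfl fun k _ => by ring
          _ = ∑ k ∈ S, ∑ l, a k i * (C i l * b k l) := Finset.sum_comm
    _ = ∑ k ∈ S, ∑ i, ∑ l, a k i * (C i l * b k l) := Finset.sum_comm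
    _ = ∑ k ∈ S, a k ⬝ᵥ (C *ᵥ b k) := by
        refine Finset.sum_congr rfl fun k _ => ?_
        rw [dotProduct]
        refine Finset.sum_congr rfl fun i _ => ?_
        rw [Matrix.mulVec, dotProduct, Finset.mul_sum]

lemma diag_pairing {m n : ℕ} {A : Matrix (Fin m) (Fin n) ℝ} {K : Finset (Fin n)}
    {σ : Fin n → ℝ} {p : Fin n → Fin m → ℝ} {q : Fin n → Fin n → ℝ}
    (hp : ∀ i ∈ K, ∀ j ∈ K, p i ⬝ᵥ p j = if i = j then 1 else 0)
    (hq : ∀ i ∈ K, ∀ j ∈ K, q i ⬝ᵥ q j = if i = j then 1 else 0)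
    (hA : ∀ i l, A i l = ∑ j ∈ K, σ j * (p j i * q j l)) :
    ∀ j ∈ K, p j ⬝ᵥ (A *ᵥ q j) = σ j := by
  intro j hj
  rw [dot_mulVec_eq hA]
  have : ∀ k ∈ K, σ k * ((p j ⬝ᵥ p k) * (q k ⬝ᵥ q j)) = if k = j then σ j else 0 := by
    intro k hk
    rw [hp j hj k hk, hq k hk j hj]
    by_cases h : k = j
    · subst h; simp
    · have h' : ¬ (j = k) := fun hc => h hc.symm
      simp [h, h']
  rw [Finset.sum_congr rfl this, Finset.sum_ite_eq' K j (fun _ => σ j), if_pos hj]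

lemma mulVec_singular {m n : ℕ} {B : Matrix (Fin m) (Fin n) ℝ} {K : Finset (Fin n)}
    {μ : Fin n → ℝ} {u : Fin n → Fin m → ℝ} {v : Fin n → Fin n → ℝ}
    (hv : ∀ i ∈ K, ∀ j ∈ K, v i ⬝ᵥ v j = if i = j then 1 else 0)
    (hB : ∀ i l, B i l = ∑ j ∈ K, μ j * (u j i * v j l))
    {j : Fin n} (hj : j ∈ K) : B *ᵥ v j = μ j • u j := by
  funext i
  show (B *ᵥ v j) i = _
  rw [Matrix.mulVec, dotProduct]
  calc ∑ l, B i l * v j l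
      = ∑ l, ∑ k ∈ K, μ k * u k i * (v k l * v j l) := by
        refine Finset.sum_congr rfl fun l _ => ?_
        rw [hB i l, Finset.sum_mul]
        exact Finset.sum_congr rfl fun k _ => by ring
    _ = ∑ k ∈ K, ∑ l, μ k * u k i * (v k l * v j l) := Finset.sum_comm
    _ = ∑ k ∈ K, μ k * u k i * (v k ⬝ᵥ v j) := by
        refine Finset.sum_congr rfl fun k _ => ?_
        rw [dotProduct, Finset.mul_sum]
    _ = (μ j • u j) i := by
        have : ∀ k ∈ K, μ k * u k i * (v k ⬝ᵥ v j) = if k = j then μ j * u j i else 0 := by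
          intro k hk
          rw [hv k hk j hj]
          by_cases h : k = j
          · subst h; simp
          · simp [h]
        rw [Finset.sum_congr rfl this, Finset.sum_ite_eq' K j _, if_pos hj]
        simp

lemma vecMul_singular {m n : ℕ} {B : Matrix (Fin m) (Fin n) ℝ} {K : Finset (Fin n)}
    {μ : Fin n → ℝ} {u : Fin n → Fin m → ℝ} {v : Fin n → Fin n → ℝ}
    (hu : ∀ i ∈ K, ∀ j ∈ K, u i ⬝ᵥ u j = if i = j then 1 else 0)
    (hB : ∀ i l, B i l = ∑ j ∈ K, μ j * (u j i * v j l))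
    {j : Fin n} (hj : j ∈ K) : u j ᵥ* B = μ j • v j := by
  funext l
  show (u j ᵥ* B) l = _
  rw [Matrix.vecMul, dotProduct]
  calc ∑ i, u j i * B i l
      = ∑ i, ∑ k ∈ K, μ k * v k l * (u j i * u k i) := by
        refine Finset.sum_congr rfl fun i _ => ?_
        rw [hB i l, Finset.mul_sum]
        exact Finset.sum_congr rfl fun k _ => by ring
    _ = ∑ k ∈ K, ∑ i, μ k * v k l * (u j i * u k i) := Finset.sum_comm
    _ = ∑ k ∈ K, μ k * v k l * (u j ⬝ᵥ u k) := by
        refine Finset.sum_congr rfl fun k _ => ?_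
        rw [dotProduct, Finset.mul_sum]
    _ = (μ j • v j) l := by
        have : ∀ k ∈ K, μ k * v k l * (u j ⬝ᵥ u k) = if k = j then μ j * v j l else 0 := by
          intro k hk
          rw [hu j hj k hk]
          by_cases h : k = j
          · subst h; simp
          · have h' : ¬ (j = k) := fun hc => h hc.symm
            simp [h, h']
        rw [Finset.sum_congr rfl this, Finset.sum_ite_eq' K j _, if_pos hj]
        simp


/-- Orthogonal projection matrix onto the span of a finite family. -/
def Pmat {k : ℕ} {ι : Type*} (S : Finset ι) (u : ι → Fin k → ℝ) : Matrix (Fin k) (Fin k) ℝ :=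
  Matrix.of fun i i' => ∑ j ∈ S, u j i * u j i'

lemma Pmat_mulVec {k : ℕ} {ι : Type*} (S : Finset ι) (u : ι → Fin k → ℝ) (c : Fin k → ℝ) :
    (Pmat S u) *ᵥ c = ∑ j ∈ S, (u j ⬝ᵥ c) • u j := by
  funext i
  show ∑ i', (∑ j ∈ S, u j i * u j i') * c i' = _
  calc ∑ i', (∑ j ∈ S, u j i * u j i') * c i'
      = ∑ i', ∑ j ∈ S, u j i * u j i' * c i' := by
        refine Finset.sum_congr rfl fun i' _ => Finset.sum_mul ..
    _ = ∑ j ∈ S, ∑ i', u j i * u j i' * c i' := Finset.sum_comm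
    _ = ∑ j ∈ S, (u j ⬝ᵥ c) * u j i := by
        refine Finset.sum_congr rfl fun j _ => ?_
        rw [dotProduct, Finset.sum_mul]
        exact Finset.sum_congr rfl fun i' _ => by ring
    _ = _ := by
        rw [Finset.sum_apply]
        exact Finset.sum_congr rfl fun j _ => rfl

lemma Pmat_transpose {k : ℕ} {ι : Type*} (S : Finset ι) (u : ι → Fin k → ℝ) :
    (Pmat S u)ᵀ = Pmat S u := by
  ext i i'
  show ∑ j ∈ S, u j i' * u j i = ∑ j ∈ S, u j i * u j i'
  exact Finset.sum_congr rfl fun j _ => mul_comm _ _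

lemma vecMul_Pmat {k : ℕ} {ι : Type*} (S : Finset ι) (u : ι → Fin k → ℝ) (c : Fin k → ℝ) :
    c ᵥ* (Pmat S u) = ∑ j ∈ S, (u j ⬝ᵥ c) • u j := by
  rw [← Pmat_transpose S u, Matrix.vecMul_transpose, Pmat_mulVec]

lemma proj_eq_self {k : ℕ} {ι : Type*} [DecidableEq ι] (S : Finset ι) (u : ι → Fin k → ℝ)
    (hu : ∀ i ∈ S, ∀ j ∈ S, u i ⬝ᵥ u j = if i = j then 1 else 0) {j₀ : ι} (hj₀ : j₀ ∈ S) :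
    ∑ j ∈ S, (u j ⬝ᵥ u j₀) • u j = u j₀ := by
  have : ∀ j ∈ S, (u j ⬝ᵥ u j₀) • u j = if j = j₀ then u j₀ else 0 := by
    intro j hj
    rw [hu j hj j₀ hj₀]
    by_cases h : j = j₀
    · subst h; simp
    · simp [h]
  rw [Finset.sum_congr rfl this, Finset.sum_ite_eq' S j₀ _, if_pos hj₀]

lemma rank_Pmat_le {k : ℕ} {ι : Type*} (S : Finset ι) (u : ι → Fin k → ℝ) :
    (Pmat S u).rank ≤ S.card := by
  classical
  set M : Matrix (Fin k) ↥S ℝ := Matrix.of fun i j => u j.1 i with hM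
  have hPM : Pmat S u = M * Mᵀ := by
    ext i i'
    rw [Matrix.mul_apply]
    show ∑ j ∈ S, u j i * u j i' = _
    rw [← Finset.sum_coe_sort S (fun j => u j i * u j i')]
    rfl
  rw [hPM]
  calc (M * Mᵀ).rank ≤ M.rank := Matrix.rank_mul_le_left M Mᵀ
    _ ≤ Fintype.card ↥S := Matrix.rank_le_card_width M
    _ = S.card := Fintype.card_coe S

def F2 {m n : ℕ} (A : Matrix (Fin m) (Fin n) ℝ) : ℝ := ∑ i, ∑ l, A i l ^ 2

lemma F2_nonneg {m n : ℕ} (A : Matrix (Fin m) (Fin n) ℝ) : 0 ≤ F2 A :=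
  Finset.sum_nonneg fun i _ => Finset.sum_nonneg fun l _ => sq_nonneg _

lemma frob_eq_sqrt_F2 {m n : ℕ} (A : Matrix (Fin m) (Fin n) ℝ) : frobNorm A = Real.sqrt (F2 A) :=
  rfl

lemma sum_sq_col {m n : ℕ} (A : Matrix (Fin m) (Fin n) ℝ) :
    F2 A = ∑ l, (fun i => A i l) ⬝ᵥ (fun i => A i l) := by
  rw [F2, Finset.sum_comm]
  exact Finset.sum_congr rfl fun l _ => Finset.sum_congr rfl fun i _ => sq (A i l)

lemma sum_sq_row {m n : ℕ} (A : Matrix (Fin m) (Fin n) ℝ) :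
    F2 A = ∑ i, (fun l => A i l) ⬝ᵥ (fun l => A i l) := by
  rw [F2]
  exact Finset.sum_congr rfl fun i _ => Finset.sum_congr rfl fun l _ => sq (A i l)

lemma F2_P_mul_le {m n : ℕ} {ι : Type*} [DecidableEq ι] (S : Finset ι) (u : ι → Fin m → ℝ)
    (hu : ∀ i ∈ S, ∀ j ∈ S, u i ⬝ᵥ u j = if i = j then 1 else 0)
    (W : Matrix (Fin m) (Fin n) ℝ) : F2 ((Pmat S u) * W) ≤ F2 W := by
  rw [sum_sq_col ((Pmat S u) * W), sum_sq_col W]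
  refine Finset.sum_le_sum fun l _ => ?_
  set c : Fin m → ℝ := fun i => W i l with hc
  have hcol : (fun i => ((Pmat S u) * W) i l) = (Pmat S u) *ᵥ c := by
    funext i
    rw [Matrix.mul_apply, Matrix.mulVec, dotProduct]
  rw [hcol, Pmat_mulVec, proj_dot_self S u hu c]
  exact bessel S u hu c

lemma F2_one_sub_P_mul_le {m n : ℕ} {ι : Type*} [DecidableEq ι] (S : Finset ι)
    (u : ι → Fin m → ℝ)
    (hu : ∀ i ∈ S, ∀ j ∈ S, u i ⬝ᵥ u j = if i = j then 1 else 0)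
    (W : Matrix (Fin m) (Fin n) ℝ) : F2 ((1 - Pmat S u) * W) ≤ F2 W := by
  have hmat : (1 - Pmat S u) * W = W - Pmat S u * W := by
    rw [Matrix.sub_mul, Matrix.one_mul]
  rw [hmat, sum_sq_col (W - Pmat S u * W), sum_sq_col W]
  refine Finset.sum_le_sum fun l _ => ?_
  set c : Fin m → ℝ := fun i => W i l with hc
  have hcol : (fun i => (W - Pmat S u * W) i l) = c - (Pmat S u) *ᵥ c := by
    funext i
    show W i l - (Pmat S u * W) i l = c i - ((Pmat S u) *ᵥ c) i
    rw [Matrix.mul_apply, Matrix.mulVec, dotProduct]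
  rw [hcol, Pmat_mulVec]
  exact sub_proj_dot_le S u hu c

lemma F2_mul_Q_le {m n : ℕ} {ι : Type*} [DecidableEq ι] (S : Finset ι) (q : ι → Fin n → ℝ)
    (hq : ∀ i ∈ S, ∀ j ∈ S, q i ⬝ᵥ q j = if i = j then 1 else 0)
    (M : Matrix (Fin m) (Fin n) ℝ) : F2 (M * Pmat S q) ≤ F2 M := by
  rw [sum_sq_row (M * Pmat S q), sum_sq_row M]
  refine Finset.sum_le_sum fun i _ => ?_
  set c : Fin n → ℝ := fun l => M i l with hc
  have hrow : (fun l => (M * Pmat S q) i l) = c ᵥ* (Pmat S q) := by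
    funext l
    rw [Matrix.mul_apply, Matrix.vecMul, dotProduct]
  rw [hrow, vecMul_Pmat, proj_dot_self S q hq c]
  exact bessel S q hq c

end NNAux

open NNAux

set_option maxHeartbeats 1000000 in
/-- Low-rank subdifferential lower bound: if `θ₀` has rank `s`, `‖ηθ* − θ₀‖_* ≤ ρ/16`,
and `ρ ≥ 16 r √s`, then every `W` with `‖W‖_F ≤ r` and `‖W‖_* = ρ` admits a subgradient
`z` of the nuclear norm at `θ₀` with `⟨z, W⟩ ≥ (3/4) ρ`. -/
theorem lowrank_subdifferential_bound
    {m n : ℕ} (hm : 0 < m) (hn : 0 < n)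
    (θη θ₀ : Matrix (Fin m) (Fin n) ℝ) (s : ℕ)
    (hrank : θ₀.rank = s)
    (r ρ : ℝ) (hr : 0 ≤ r) (hρ : 0 < ρ)
    (hclose : nuclearNorm (θη - θ₀) ≤ ρ / 16)
    (hρr : 16 * r * Real.sqrt s ≤ ρ) :
    ∀ W : Matrix (Fin m) (Fin n) ℝ, frobNorm W ≤ r → nuclearNorm W = ρ →
      ∃ z : Matrix (Fin m) (Fin n) ℝ,
        (∀ W' : Matrix (Fin m) (Fin n) ℝ,
          nuclearNorm θ₀ + matInner z (W' - θ₀) ≤ nuclearNorm W') ∧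
        (3 / 4) * ρ ≤ matInner z W := by
  classical
  intro W hWF hWN
  obtain ⟨K₀, σ, p, q, hσ, hqfull, hpON, hθdec, hNθ, _, hcardθ⟩ := exists_svd θ₀
  have hqON : ∀ i ∈ K₀, ∀ j ∈ K₀, q i ⬝ᵥ q j = if i = j then 1 else 0 :=
    fun i _ j _ => hqfull i j
  have hcards : K₀.card = s := by rw [hcardθ, hrank]
  set P : Matrix (Fin m) (Fin m) ℝ := Pmat K₀ p with hPdef
  set Q : Matrix (Fin n) (Fin n) ℝ := Pmat K₀ q with hQdef
  set B : Matrix (Fin m) (Fin n) ℝ := (1 - P) * W * (1 - Q) with hBdef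
  obtain ⟨KB, μ, u', v', hμ, hv'full, hu'ON, hBdec, hNB, _, _⟩ := exists_svd B
  have hv'ON : ∀ i ∈ KB, ∀ j ∈ KB, v' i ⬝ᵥ v' j = if i = j then 1 else 0 :=
    fun i _ j _ => hv'full i j
  -- basic projection facts
  have hQq : ∀ k ∈ K₀, Q *ᵥ q k = q k := by
    intro k hk
    rw [hQdef, Pmat_mulVec, proj_eq_self K₀ q hqON hk]
  have hpP : ∀ k ∈ K₀, p k ᵥ* P = p k := by
    intro k hk
    rw [hPdef, vecMul_Pmat, proj_eq_self K₀ p hpON hk]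
  have hBq : ∀ k ∈ K₀, B *ᵥ q k = 0 := by
    intro k hk
    rw [hBdef, ← Matrix.mulVec_mulVec, Matrix.sub_mulVec, Matrix.one_mulVec, hQq k hk,
      sub_self, Matrix.mulVec_zero]
  have hpB : ∀ k ∈ K₀, p k ᵥ* B = 0 := by
    intro k hk
    have h0 : p k ᵥ* (1 - P) = 0 := by
      rw [Matrix.vecMul_sub, Matrix.vecMul_one, hpP k hk, sub_self]
    rw [hBdef, ← Matrix.vecMul_vecMul, ← Matrix.vecMul_vecMul, h0, Matrix.zero_vecMul,
      Matrix.zero_vecMul]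
  -- singular vector facts for B
  have hBv : ∀ j ∈ KB, B *ᵥ v' j = μ j • u' j := fun j hj => mulVec_singular hv'ON hBdec hj
  have hu'B : ∀ j ∈ KB, u' j ᵥ* B = μ j • v' j := fun j hj => vecMul_singular hu'ON hBdec hj
  -- cross-orthogonality
  have hpu' : ∀ k ∈ K₀, ∀ j ∈ KB, p k ⬝ᵥ u' j = 0 := by
    intro k hk j hj
    have h1 : p k ⬝ᵥ (B *ᵥ v' j) = μ j * (p k ⬝ᵥ u' j) := by
      rw [hBv j hj, dotProduct_smul, smul_eq_mul]
    rw [dotProduct_mulVec, hpB k hk, zero_dotProduct] at h1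
    have := (hμ j hj).ne'
    field_simp at h1
    exact (mul_eq_zero.mp h1.symm).resolve_left this
  have hqv' : ∀ k ∈ K₀, ∀ j ∈ KB, q k ⬝ᵥ v' j = 0 := by
    intro k hk j hj
    have h1 : (u' j ᵥ* B) ⬝ᵥ q k = μ j * (v' j ⬝ᵥ q k) := by
      rw [hu'B j hj, smul_dotProduct, smul_eq_mul]
    rw [← dotProduct_mulVec, hBq k hk, dotProduct_zero] at h1
    have := (hμ j hj).ne'
    have h2 : v' j ⬝ᵥ q k = 0 := by
      field_simp at h1
      exact (mul_eq_zero.mp h1.symm).resolve_left this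
    rw [dotProduct_comm]
    exact h2
  -- the subgradient candidate
  set z : Matrix (Fin m) (Fin n) ℝ :=
    Matrix.of fun i l => (∑ k ∈ K₀, p k i * q k l) + ∑ j ∈ KB, u' j i * v' j l with hzdef
  have hzinner : ∀ A : Matrix (Fin m) (Fin n) ℝ,
      matInner z A = (∑ k ∈ K₀, p k ⬝ᵥ (A *ᵥ q k)) + ∑ j ∈ KB, u' j ⬝ᵥ (A *ᵥ v' j) := by
    intro A
    rw [matInner_eq, ← pair_sum K₀ p q A, ← pair_sum KB u' v' A, ← Finset.sum_add_distrib]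
    refine Finset.sum_congr rfl fun i _ => ?_
    rw [← Finset.sum_add_distrib]
    refine Finset.sum_congr rfl fun l _ => ?_
    show ((∑ k ∈ K₀, p k i * q k l) + ∑ j ∈ KB, u' j i * v' j l) * A i l = _
    ring
  -- duality: matInner z A ≤ nuclearNorm A for every A
  have hdual : ∀ A : Matrix (Fin m) (Fin n) ℝ, matInner z A ≤ nuclearNorm A := by
    intro A
    rw [hzinner A]
    have huu : ∀ i ∈ K₀.disjSum KB, ∀ j ∈ K₀.disjSum KB,
        Sum.elim p u' i ⬝ᵥ Sum.elim p u' j = if i = j then 1 else 0 := by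
      rintro (a|a) ha (b|b) hb
      · rw [Finset.inl_mem_disjSum] at ha hb
        simp only [Sum.elim_inl, Sum.inl.injEq]
        exact hpON a ha b hb
      · rw [Finset.inl_mem_disjSum] at ha
        rw [Finset.inr_mem_disjSum] at hb
        simp only [Sum.elim_inl, Sum.elim_inr, reduceCtorEq, if_false]
        exact hpu' a ha b hb
      · rw [Finset.inr_mem_disjSum] at ha
        rw [Finset.inl_mem_disjSum] at hb
        simp only [Sum.elim_inl, Sum.elim_inr, reduceCtorEq, if_false]
        rw [dotProduct_comm]
        exact hpu' b hb a ha
      · rw [Finset.inr_mem_disjSum] at ha hb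
        simp only [Sum.elim_inr, Sum.inr.injEq]
        exact hu'ON a ha b hb
    have hvv : ∀ i ∈ K₀.disjSum KB, ∀ j ∈ K₀.disjSum KB,
        Sum.elim q v' i ⬝ᵥ Sum.elim q v' j = if i = j then 1 else 0 := by
      rintro (a|a) ha (b|b) hb
      · rw [Finset.inl_mem_disjSum] at ha hb
        simp only [Sum.elim_inl, Sum.inl.injEq]
        exact hqON a ha b hb
      · rw [Finset.inl_mem_disjSum] at ha
        rw [Finset.inr_mem_disjSum] at hb
        simp only [Sum.elim_inl, Sum.elim_inr, reduceCtorEq, if_false]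
        exact hqv' a ha b hb
      · rw [Finset.inr_mem_disjSum] at ha
        rw [Finset.inl_mem_disjSum] at hb
        simp only [Sum.elim_inl, Sum.elim_inr, reduceCtorEq, if_false]
        rw [dotProduct_comm]
        exact hqv' b hb a ha
      · rw [Finset.inr_mem_disjSum] at ha hb
        simp only [Sum.elim_inr, Sum.inr.injEq]
        exact hv'ON a ha b hb
    have hkey := key A (K₀.disjSum KB) (Sum.elim p u') (Sum.elim q v') huu hvv
    rw [Finset.sum_disjSum] at hkey
    exact hkey
  -- pairing with θ₀ gives the nuclear norm
  have hzθ : matInner z θ₀ = nuclearNorm θ₀ := by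
    rw [hzinner θ₀, hNθ]
    have h1 : ∑ k ∈ K₀, p k ⬝ᵥ (θ₀ *ᵥ q k) = ∑ k ∈ K₀, σ k :=
      Finset.sum_congr rfl fun k hk => diag_pairing hpON hqON hθdec k hk
    have h2 : ∑ j ∈ KB, u' j ⬝ᵥ (θ₀ *ᵥ v' j) = 0 := by
      refine Finset.sum_eq_zero fun j hj => ?_
      rw [dot_mulVec_eq hθdec]
      refine Finset.sum_eq_zero fun k hk => ?_
      rw [hqv' k hk j hj]
      ring
    rw [h1, h2, add_zero]
  -- lower bound on matInner z W
  have hWsplit : W = P * W + ((1 - P) * W * Q + B) := by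
    have h1 : (1 - P) * W * Q + B = (1 - P) * W := by
      rw [hBdef, ← Matrix.mul_add, add_sub_cancel, Matrix.mul_one]
    rw [h1, ← Matrix.add_mul, add_sub_cancel, Matrix.one_mul]
  -- second sum equals nuclearNorm B
  have hS2 : ∑ j ∈ KB, u' j ⬝ᵥ (W *ᵥ v' j) = nuclearNorm B := by
    rw [hNB]
    refine Finset.sum_congr rfl fun j hj => ?_
    have hsplit : W *ᵥ v' j = (P * W) *ᵥ v' j + (((1 - P) * W * Q) *ᵥ v' j + B *ᵥ v' j) := by
      rw [← Matrix.add_mulVec, ← Matrix.add_mulVec, ← hWsplit]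
    have hterm1 : u' j ⬝ᵥ ((P * W) *ᵥ v' j) = 0 := by
      rw [dotProduct_mulVec, ← Matrix.vecMul_vecMul]
      have : u' j ᵥ* P = 0 := by
        rw [hPdef, vecMul_Pmat]
        refine Finset.sum_eq_zero fun k hk => ?_
        rw [hpu' k hk j hj, zero_smul]
      rw [this, Matrix.zero_vecMul, zero_dotProduct]
    have hterm2 : u' j ⬝ᵥ (((1 - P) * W * Q) *ᵥ v' j) = 0 := by
      have hQv : Q *ᵥ v' j = 0 := by
        rw [hQdef, Pmat_mulVec]
        refine Finset.sum_eq_zero fun k hk => ?_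
        rw [hqv' k hk j hj, zero_smul]
      rw [← Matrix.mulVec_mulVec, hQv, Matrix.mulVec_zero, dotProduct_zero]
    have hterm3 : u' j ⬝ᵥ (B *ᵥ v' j) = μ j := by
      rw [hBv j hj, dotProduct_smul, smul_eq_mul, hu'ON j hj j hj, if_pos rfl, mul_one]
    rw [hsplit, dotProduct_add, dotProduct_add, hterm1, hterm2, hterm3, zero_add, zero_add]
  -- first sum is bounded below
  have hsqs : (0:ℝ) ≤ Real.sqrt s := Real.sqrt_nonneg _
  have hF2W : F2 W ≤ r ^ 2 := by
    have h1 : Real.sqrt (F2 W) ≤ r := by rw [← frob_eq_sqrt_F2]; exact hWF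
    nlinarith [Real.sq_sqrt (F2_nonneg W), Real.sqrt_nonneg (F2 W)]
  have hS1 : -(Real.sqrt s * r) ≤ ∑ k ∈ K₀, p k ⬝ᵥ (W *ᵥ q k) := by
    have hterm : ∀ k ∈ K₀, -Real.sqrt ((W *ᵥ q k) ⬝ᵥ (W *ᵥ q k)) ≤ p k ⬝ᵥ (W *ᵥ q k) := by
      intro k hk
      set y := W *ᵥ q k with hy
      have hcs := Finset.sum_mul_sq_le_sq_mul_sq Finset.univ (p k) y
      have hpk : ∑ i, p k i ^ 2 = 1 := by
        have := hpON k hk k hk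
        rw [if_pos rfl] at this
        rw [← this, dotProduct]
        exact Finset.sum_congr rfl fun i _ => sq (p k i)
      have hyy : ∑ i, y i ^ 2 = y ⬝ᵥ y :=
        Finset.sum_congr rfl fun i _ => sq (y i)
      have h1 : (p k ⬝ᵥ y) ^ 2 ≤ y ⬝ᵥ y := by
        calc (p k ⬝ᵥ y) ^ 2 = (∑ i, p k i * y i) ^ 2 := by rw [dotProduct]
          _ ≤ (∑ i, p k i ^ 2) * ∑ i, y i ^ 2 := hcs
          _ = y ⬝ᵥ y := by rw [hpk, hyy, one_mul]
      have h2 : |p k ⬝ᵥ y| ≤ Real.sqrt (y ⬝ᵥ y) := Real.abs_le_sqrt h1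
      have := neg_abs_le (p k ⬝ᵥ y)
      linarith [neg_le_neg h2]
    have hsum1 : -(∑ k ∈ K₀, Real.sqrt ((W *ᵥ q k) ⬝ᵥ (W *ᵥ q k)))
        ≤ ∑ k ∈ K₀, p k ⬝ᵥ (W *ᵥ q k) := by
      rw [← Finset.sum_neg_distrib]
      exact Finset.sum_le_sum hterm
    have hsum2 : ∑ k ∈ K₀, Real.sqrt ((W *ᵥ q k) ⬝ᵥ (W *ᵥ q k)) ≤ Real.sqrt s * r := by
      set a : Fin n → ℝ := fun k => (W *ᵥ q k) ⬝ᵥ (W *ᵥ q k) with ha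
      have ha0 : ∀ k, 0 ≤ a k := fun k => dot_self_nonneg _
      have hsumA : ∑ k ∈ K₀, a k ≤ F2 W := by
        have hrow : ∀ k ∈ K₀, a k = ∑ i, (q k ⬝ᵥ (fun l => W i l)) ^ 2 := by
          intro k _
          rw [ha]
          show (W *ᵥ q k) ⬝ᵥ (W *ᵥ q k) = _
          rw [dotProduct]
          refine Finset.sum_congr rfl fun i _ => ?_
          have : (W *ᵥ q k) i = q k ⬝ᵥ (fun l => W i l) := by
            rw [Matrix.mulVec, dotProduct_comm]
          rw [this, sq]
        rw [Finset.sum_congr rfl hrow, Finset.sum_comm, sum_sq_row]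
        refine Finset.sum_le_sum fun i _ => ?_
        exact bessel K₀ q hqON (fun l => W i l)
      have hcs2 := Finset.sum_mul_sq_le_sq_mul_sq K₀ (fun _ => (1:ℝ))
        (fun k => Real.sqrt (a k))
      simp only [one_pow, one_mul, Finset.sum_const, nsmul_eq_mul] at hcs2
      have hsq : ∀ k ∈ K₀, Real.sqrt (a k) ^ 2 = a k := fun k _ => Real.sq_sqrt (ha0 k)
      rw [Finset.sum_congr rfl hsq] at hcs2
      have hnn : (0:ℝ) ≤ ∑ k ∈ K₀, Real.sqrt (a k) :=
        Finset.sum_nonneg fun k _ => Real.sqrt_nonneg _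
      have hsums : ∑ k ∈ K₀, a k ≤ r ^ 2 := le_trans hsumA hF2W
      have hfinal : (∑ k ∈ K₀, Real.sqrt (a k)) ^ 2 ≤ (Real.sqrt s * r) ^ 2 := by
        calc (∑ k ∈ K₀, Real.sqrt (a k)) ^ 2 ≤ (K₀.card : ℝ) * 1 * ∑ k ∈ K₀, a k := hcs2
          _ = (s : ℝ) * ∑ k ∈ K₀, a k := by rw [hcards]; ring
          _ ≤ (s : ℝ) * r ^ 2 := by
              apply mul_le_mul_of_nonneg_left hsums (Nat.cast_nonneg s)
          _ = (Real.sqrt s * r) ^ 2 := by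
              rw [mul_pow, Real.sq_sqrt (Nat.cast_nonneg s)]
      nlinarith [hfinal, hnn, mul_nonneg hsqs hr]
    calc -(Real.sqrt s * r) ≤ -(∑ k ∈ K₀, Real.sqrt ((W *ᵥ q k) ⬝ᵥ (W *ᵥ q k))) :=
          neg_le_neg hsum2
      _ ≤ _ := hsum1
  -- nuclear norm of B is large
  have hNBlarge : ρ - 2 * (Real.sqrt s * r) ≤ nuclearNorm B := by
    have hsrank : (P * W).rank ≤ s := by
      calc (P * W).rank ≤ P.rank := Matrix.rank_mul_le_left P W
        _ ≤ K₀.card := by rw [hPdef]; exact rank_Pmat_le K₀ p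
        _ = s := hcards
    have hqrank : ((1 - P) * W * Q).rank ≤ s := by
      calc ((1 - P) * W * Q).rank ≤ Q.rank := Matrix.rank_mul_le_right ((1 - P) * W) Q
        _ ≤ K₀.card := by rw [hQdef]; exact rank_Pmat_le K₀ q
        _ = s := hcards
    have hfP : frobNorm (P * W) ≤ r := by
      rw [frob_eq_sqrt_F2]
      calc Real.sqrt (F2 (P * W)) ≤ Real.sqrt (F2 W) :=
            Real.sqrt_le_sqrt (by rw [hPdef]; exact F2_P_mul_le K₀ p hpON W)
        _ ≤ r := by rw [← frob_eq_sqrt_F2]; exact hWF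
    have hfQ : frobNorm ((1 - P) * W * Q) ≤ r := by
      rw [frob_eq_sqrt_F2]
      calc Real.sqrt (F2 ((1 - P) * W * Q)) ≤ Real.sqrt (F2 ((1 - P) * W)) := by
            apply Real.sqrt_le_sqrt
            rw [hQdef]
            exact F2_mul_Q_le K₀ q hqON ((1 - P) * W)
        _ ≤ Real.sqrt (F2 W) := by
            apply Real.sqrt_le_sqrt
            rw [hPdef]
            exact F2_one_sub_P_mul_le K₀ p hpON W
        _ ≤ r := by rw [← frob_eq_sqrt_F2]; exact hWF
    have hN1 : nuclearNorm (P * W) ≤ Real.sqrt s * r := by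
      calc nuclearNorm (P * W) ≤ Real.sqrt s * frobNorm (P * W) :=
            nuclear_le_sqrt_rank_mul_frob (P * W) hsrank
        _ ≤ Real.sqrt s * r := mul_le_mul_of_nonneg_left hfP hsqs
    have hN2 : nuclearNorm ((1 - P) * W * Q) ≤ Real.sqrt s * r := by
      calc nuclearNorm ((1 - P) * W * Q) ≤ Real.sqrt s * frobNorm ((1 - P) * W * Q) :=
            nuclear_le_sqrt_rank_mul_frob ((1 - P) * W * Q) hqrank
        _ ≤ Real.sqrt s * r := mul_le_mul_of_nonneg_left hfQ hsqs
    have htriple : ρ ≤ nuclearNorm (P * W) + (nuclearNorm ((1 - P) * W * Q) + nuclearNorm B) := by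
      calc ρ = nuclearNorm W := hWN.symm
        _ = nuclearNorm (P * W + ((1 - P) * W * Q + B)) := by rw [← hWsplit]
        _ ≤ nuclearNorm (P * W) + nuclearNorm ((1 - P) * W * Q + B) := nuclear_triangle _ _
        _ ≤ nuclearNorm (P * W) + (nuclearNorm ((1 - P) * W * Q) + nuclearNorm B) := by
            have := nuclear_triangle ((1 - P) * W * Q) B
            linarith
    linarith
  -- arithmetic finale
  have hsr : Real.sqrt s * r ≤ ρ / 16 := by
    have : r * Real.sqrt s = Real.sqrt s * r := mul_comm _ _
    linarith [hρr, this]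
  have hzW : matInner z W = (∑ k ∈ K₀, p k ⬝ᵥ (W *ᵥ q k)) + nuclearNorm B := by
    rw [hzinner W, hS2]
  refine ⟨z, ?_, ?_⟩
  · intro W'
    have hlin : matInner z (W' - θ₀) = matInner z W' - matInner z θ₀ := by
      rw [matInner_eq, matInner_eq, matInner_eq, ← Finset.sum_sub_distrib]
      refine Finset.sum_congr rfl fun i _ => ?_
      rw [← Finset.sum_sub_distrib]
      refine Finset.sum_congr rfl fun l _ => ?_
      show z i l * (W' i l - θ₀ i l) = _
      ring
    rw [hlin, hzθ]
    have := hdual W'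
    linarith
  · rw [hzW]
    have h1 : -(ρ/16) ≤ ∑ k ∈ K₀, p k ⬝ᵥ (W *ᵥ q k) := by
      have := neg_le_neg hsr
      linarith [hS1]
    have h2 : ρ - 2 * (ρ/16) ≤ nuclearNorm B := by
      have h2a : ρ - 2 * (Real.sqrt s * r) ≤ nuclearNorm B := hNBlarge
      have hss : 2 * (Real.sqrt s * r) ≤ 2 * (ρ/16) := by linarith
      linarith
    linarith

end
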